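/- If C₁ and C₂ are nonempty convex sets with nonempty intersection, then lin(C₁) ∩ lin(C₂) ⊆ lin(C₁ ∩ C₂); if moreover C₁ and C₂ are both linearly closed, then equality holds. -/
import Mathlib


open Set

def linealitySet {W : Type*} [AddCommGroup W] [Module ℝ W] (C : Set W) : Set W :=
  {v | ∀ x ∈ C, ∀ t : ℝ, x + t • v ∈ C}

def LinearlyClosed {W : Type*} [AddCommGroup W] [Module ℝ W] (C : Set W) : Prop :=
  ∀ a v : W, IsClosed {t : ℝ | a + t • v ∈ C}

lemma aux_lineality {V : Type*} [AddCommGroup V] [Module ℝ V]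
    {C : Set V} (hC : Convex ℝ C) (hcl : LinearlyClosed C) {a v : V}
    (ha : ∀ s : ℝ, a + s • v ∈ C) : v ∈ linealitySet C := by
  intro x hx t
  have hS : IsClosed {l : ℝ | (x + t • v) + l • (a - x) ∈ C} := hcl _ _
  have hsub : Set.Ioc (0:ℝ) 1 ⊆ {l : ℝ | (x + t • v) + l • (a - x) ∈ C} := by
    intro l hl
    have hl0 : 0 < l := hl.1
    have := hC (a := l) (b := 1 - l) (ha (t / l)) hx (le_of_lt hl0) (by linarith [hl.2]) (by ring)
    have heq : l • (a + (t / l) • v) + (1 - l) • x = (x + t • v) + l • (a - x) := by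
      rw [smul_add, smul_smul, mul_div_cancel₀ _ (ne_of_gt hl0)]
      module
    rw [heq] at this
    exact this
  have h0 : (0:ℝ) ∈ closure (Set.Ioc (0:ℝ) 1) := by
    rw [closure_Ioc one_ne_zero.symm]
    exact ⟨le_refl 0, zero_le_one⟩
  have := (hS.closure_subset_iff.mpr hsub) (closure_mono (le_refl _) h0)
  simpa using this

theorem linealitySet_inter
    {V : Type*} [AddCommGroup V] [Module ℝ V]
    {C₁ C₂ : Set V} (hC₁ : Convex ℝ C₁) (hC₂ : Convex ℝ C₂)
    (hne₁ : C₁.Nonempty) (hne₂ : C₂.Nonempty) (hne : (C₁ ∩ C₂).Nonempty) :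
    linealitySet C₁ ∩ linealitySet C₂ ⊆ linealitySet (C₁ ∩ C₂) ∧
    (LinearlyClosed C₁ → LinearlyClosed C₂ →
      linealitySet C₁ ∩ linealitySet C₂ = linealitySet (C₁ ∩ C₂)) := by
  constructor
  · rintro v ⟨h1, h2⟩ x ⟨hx1, hx2⟩ t
    exact ⟨h1 x hx1 t, h2 x hx2 t⟩
  · intro hcl₁ hcl₂
    apply Subset.antisymm
    · rintro v ⟨h1, h2⟩ x ⟨hx1, hx2⟩ t
      exact ⟨h1 x hx1 t, h2 x hx2 t⟩
    · intro v hv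
      obtain ⟨a, ha⟩ := hne
      have h := hv a ha
      exact ⟨aux_lineality hC₁ hcl₁ (fun s => (h s).1),
             aux_lineality hC₂ hcl₂ (fun s => (h s).2)⟩
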